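/- Every real linear combination of 4×4 permutation matrices can be written as a sum of at most 6 permutative matrices, each of which is a linear combination of 4 pairwise Hadamard-orthogonal permutation matrices. -/

import Mathlib

open Matrix

/-- The permutation matrix of `σ`: entry `(i,j)` is `1` if `σ i = j`, else `0`. -/
def permMat (n : ℕ) (σ : Equiv.Perm (Fin n)) : Matrix (Fin n) (Fin n) ℝ :=
  Matrix.of fun i j => if σ i = j then (1 : ℝ) else 0

/-- A matrix is permutative if every row is a permutation of every other row. -/
def Permutative {n : ℕ} {R : Type*} (A : Matrix (Fin n) (Fin n) R) : Prop :=
  ∀ i j : Fin n, ∃ σ : Equiv.Perm (Fin n), ∀ k, A j k = A i (σ k)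

/-- The 24 permutations of `Fin 4` (as functions), arranged in 6 classes of 4
pairwise everywhere-disagreeing permutations. -/
def tf : Fin 6 → Fin 4 → Fin 4 → Fin 4 :=
![![![0,1,2,3], ![1,0,3,2], ![2,3,0,1], ![3,2,1,0]],
  ![![0,2,1,3], ![1,3,2,0], ![2,0,3,1], ![3,1,0,2]],
  ![![0,3,2,1], ![1,2,0,3], ![2,1,3,0], ![3,0,1,2]],
  ![![0,1,3,2], ![1,0,2,3], ![2,3,1,0], ![3,2,0,1]],
  ![![3,1,2,0], ![1,3,0,2], ![2,0,1,3], ![0,2,3,1]],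
  ![![2,1,0,3], ![1,2,3,0], ![3,0,2,1], ![0,3,1,2]]]

lemma tf_bij : ∀ k m, Function.Bijective (tf k m) := by decide

lemma tf_all_inj : Function.Injective (fun p : Fin 6 × Fin 4 => tf p.1 p.2) := by decide

lemma tf_row_inj : ∀ (k : Fin 6) (i : Fin 4), Function.Injective (fun m => tf k m i) := by
  decide

lemma tf_disagree : ∀ (k : Fin 6) (m m' : Fin 4), m ≠ m' → ∀ x, tf k m x ≠ tf k m' x := by
  decide

noncomputable def tperm (k : Fin 6) (m : Fin 4) : Equiv.Perm (Fin 4) :=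
  Equiv.ofBijective (tf k m) (tf_bij k m)

lemma tperm_apply (k : Fin 6) (m x : Fin 4) : tperm k m x = tf k m x := rfl

lemma tperm_inj : Function.Injective (fun p : Fin 6 × Fin 4 => tperm p.1 p.2) := by
  intro p q h
  exact tf_all_inj (funext fun x => Equiv.ext_iff.mp h x)

noncomputable def rowe (k : Fin 6) (i : Fin 4) : Equiv.Perm (Fin 4) :=
  Equiv.ofBijective (fun m => tf k m i)
    ((Fintype.bijective_iff_injective_and_card _).mpr ⟨tf_row_inj k i, rfl⟩)

theorem lin_comb_decomposes_into_six_permutative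
    (c : Equiv.Perm (Fin 4) → ℝ) :
    ∃ B : Fin 6 → Matrix (Fin 4) (Fin 4) ℝ,
      (∑ σ : Equiv.Perm (Fin 4), c σ • permMat 4 σ) = ∑ k, B k ∧
      ∀ k : Fin 6, Permutative (B k) ∧
        ∃ (τ : Fin 4 → Equiv.Perm (Fin 4)) (a : Fin 4 → ℝ),
          Function.Injective τ ∧
          (∀ i j : Fin 4, i ≠ j →
            ∀ k' l : Fin 4, permMat 4 (τ i) k' l * permMat 4 (τ j) k' l = 0) ∧
          B k = ∑ i, a i • permMat 4 (τ i) := by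
  set B : Fin 6 → Matrix (Fin 4) (Fin 4) ℝ :=
    fun k => ∑ m, c (tperm k m) • permMat 4 (tperm k m) with hB
  -- key entry computation
  have hentry : ∀ (k : Fin 6) (i m : Fin 4), B k i (tf k m i) = c (tperm k m) := by
    intro k i m
    have : B k i (tf k m i)
        = ∑ m', c (tperm k m') * (if tf k m' i = tf k m i then (1:ℝ) else 0) := by
      simp [hB, Matrix.sum_apply, permMat, tperm_apply]
      exact Finset.sum_congr rfl fun x _ => by
        change (c (tperm k x) * if tf k x i = tf k m i then (1:ℝ) else 0) =
          if tf k x i = tf k m i then c (tperm k x) else 0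
        rw [mul_ite, mul_one, mul_zero]
    rw [this, Finset.sum_eq_single m]
    · simp
    · intro b _ hb
      simp [tf_disagree k b m hb i]
    · simp
  refine ⟨B, ?_, ?_⟩
  · -- sum equality
    have hbij : Function.Bijective (fun p : Fin 6 × Fin 4 => tperm p.1 p.2) :=
      (Fintype.bijective_iff_injective_and_card _).mpr ⟨tperm_inj, by
        simp [Fintype.card_perm]; rfl⟩
    calc ∑ σ : Equiv.Perm (Fin 4), c σ • permMat 4 σ
        = ∑ p : Fin 6 × Fin 4, c (tperm p.1 p.2) • permMat 4 (tperm p.1 p.2) :=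
          (Function.Bijective.sum_comp hbij (fun σ => c σ • permMat 4 σ)).symm
      _ = ∑ k, B k := by rw [Fintype.sum_prod_type]
  · intro k
    constructor
    · -- Permutative
      intro i j
      refine ⟨(rowe k j).symm.trans (rowe k i), fun l => ?_⟩
      have hl : tf k ((rowe k j).symm l) j = l := (rowe k j).apply_symm_apply l
      calc B k j l = B k j (tf k ((rowe k j).symm l) j) := by rw [hl]
        _ = c (tperm k ((rowe k j).symm l)) := hentry k j _
        _ = B k i (tf k ((rowe k j).symm l) i) := (hentry k i _).symm
        _ = B k i (((rowe k j).symm.trans (rowe k i)) l) := rfl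
    · refine ⟨tperm k, fun m => c (tperm k m), ?_, ?_, rfl⟩
      · intro m m' h
        have : ((k, m) : Fin 6 × Fin 4) = (k, m') := tperm_inj h
        exact (Prod.mk.injEq _ _ _ _ ▸ this : _ ∧ _).2
      · intro i j hij k' l
        by_cases h : tf k i k' = l
        · have h2 : tf k j k' ≠ l := fun hl => tf_disagree k i j hij k' (h.trans hl.symm)
          simp [permMat, tperm_apply, h2]
        · simp [permMat, tperm_apply, h]
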